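/- Consider support vector machines with smooth hinge loss: ℓ(w,(a,y)) = ℓ_σ(y aᵀw) + λ‖w‖²/2 on ℝ^d, where ℓ_σ(z) = 1 − z + σ log(1 + e^{−(1−z)/σ}) with smoothing parameter σ > 0, λ > 0, data points z_i = (a_i, y_i) with y_i ∈ {−1,+1}, and R := max_i ‖a_i‖ < ∞. Assume the step-size satisfies 0 < η < 1/(λ + R²/(4σ)). Let μ be any Borel probability measure on ℝ^d invariant under the SGD iterated function system with batch size b (so m_b = n/b batches). Then dim̄_H μ ≤ log(n/b) / log(1/(1 − ηλ)). -/

import Mathlib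

open MeasureTheory Filter
open scoped ENNReal RealInnerProductSpace

/-- The upper Hausdorff dimension of a measure:
`dim̄_H μ := inf {dim_H A : A Borel, μ A = 1}`. -/
noncomputable def upperHausdorffDim {X : Type*} [EMetricSpace X] [MeasurableSpace X]
    (μ : Measure X) : ℝ≥0∞ :=
  ⨅ (A : Set X) (_ : MeasurableSet A) (_ : μ A = 1), dimH A

section Aux

open Set Topology
open scoped NNReal


noncomputable def sgdPhi (σ t : ℝ) : ℝ :=
  Real.exp (-(1 - t) / σ) / (1 + Real.exp (-(1 - t) / σ)) - 1

lemma sgdPhi_hasDerivAt {σ : ℝ} (hσ : 0 < σ) (t : ℝ) :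
    HasDerivAt (sgdPhi σ)
      (Real.exp (-(1 - t) / σ) * (1 / σ) / (1 + Real.exp (-(1 - t) / σ)) ^ 2) t := by
  have h1 : HasDerivAt (fun t : ℝ => -(1 - t) / σ) (1 / σ) t := by
    have := (((hasDerivAt_id t).const_sub 1).neg).div_const σ
    simpa using this
  have h2 := h1.exp
  have hpos : ∀ s : ℝ, (0:ℝ) < 1 + Real.exp (-(1 - s) / σ) := fun s => by positivity
  have h3 : HasDerivAt (fun s : ℝ => 1 + Real.exp (-(1 - s) / σ))
      (Real.exp (-(1 - t) / σ) * (1 / σ)) t := h2.const_add 1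
  have h4 := h2.div h3 (ne_of_gt (hpos t))
  have h5 := h4.sub_const 1
  refine h5.congr_deriv ?_
  have e0 : Real.exp (-(1 - t) / σ) > 0 := Real.exp_pos _
  field_simp
  ring

lemma sgdPhi_deriv_nonneg {σ : ℝ} (hσ : 0 < σ) (t : ℝ) :
    0 ≤ Real.exp (-(1 - t) / σ) * (1 / σ) / (1 + Real.exp (-(1 - t) / σ)) ^ 2 := by positivity

lemma sgdPhi_deriv_le {σ : ℝ} (hσ : 0 < σ) (t : ℝ) :
    Real.exp (-(1 - t) / σ) * (1 / σ) / (1 + Real.exp (-(1 - t) / σ)) ^ 2 ≤ 1 / (4 * σ) := by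
  set e := Real.exp (-(1 - t) / σ) with he
  have he0 : 0 < e := Real.exp_pos _
  rw [div_le_div_iff₀ (by positivity) (by positivity)]
  have h4 : e * (1 / σ) * (4 * σ) = 4 * e := by field_simp
  rw [h4]
  nlinarith [sq_nonneg (1 - e)]

lemma sgdPhi_mono {σ : ℝ} (hσ : 0 < σ) : Monotone (sgdPhi σ) := by
  have hd : ∀ t, HasDerivAt (sgdPhi σ)
      (Real.exp (-(1 - t) / σ) * (1 / σ) / (1 + Real.exp (-(1 - t) / σ)) ^ 2) t :=
    sgdPhi_hasDerivAt hσ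
  apply monotone_of_deriv_nonneg (fun t => (hd t).differentiableAt)
  intro t
  rw [(hd t).deriv]
  exact sgdPhi_deriv_nonneg hσ t

lemma sgdPhi_lipschitz {σ : ℝ} (hσ : 0 < σ) (s t : ℝ) :
    |sgdPhi σ s - sgdPhi σ t| ≤ (1 / (4 * σ)) * |s - t| := by
  have hd : ∀ u, HasDerivAt (sgdPhi σ)
      (Real.exp (-(1 - u) / σ) * (1 / σ) / (1 + Real.exp (-(1 - u) / σ)) ^ 2) u :=
    sgdPhi_hasDerivAt hσ
  have := convex_univ.norm_image_sub_le_of_norm_deriv_le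
    (f := sgdPhi σ) (C := 1 / (4 * σ))
    (fun u _ => (hd u).differentiableAt)
    (fun u _ => by rw [(hd u).deriv, Real.norm_eq_abs,
        abs_of_nonneg (sgdPhi_deriv_nonneg hσ u)]; exact sgdPhi_deriv_le hσ u)
    (Set.mem_univ t) (Set.mem_univ s)
  simpa [Real.norm_eq_abs] using this

variable {E : Type*} [NormedAddCommGroup E] [InnerProductSpace ℝ E] [CompleteSpace E]

lemma svm_hasGradientAt {σ lam : ℝ} (hσ : 0 < σ) (aj : E) (yj : ℝ) (w : E) :
    HasGradientAt (fun w' : E =>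
      (1 - yj * ⟪aj, w'⟫ + σ * Real.log (1 + Real.exp (-(1 - yj * ⟪aj, w'⟫) / σ)))
        + lam * ‖w'‖ ^ 2 / 2)
      ((sgdPhi σ (yj * ⟪aj, w⟫) * yj) • aj + lam • w) w := by
  set t0 : ℝ := yj * ⟪aj, w⟫ with ht0
  -- scalar part
  have hu : HasFDerivAt (fun w' : E => yj * ⟪aj, w'⟫) (yj • innerSL ℝ aj) w :=
    ((innerSL ℝ aj).hasFDerivAt).const_mul yj
  have hF0 : HasDerivAt (fun t : ℝ =>
      1 - t + σ * Real.log (1 + Real.exp (-(1 - t) / σ))) (sgdPhi σ t0) t0 := by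
    have h1 : HasDerivAt (fun t : ℝ => -(1 - t) / σ) (1 / σ) t0 := by
      have := (((hasDerivAt_id t0).const_sub 1).neg).div_const σ
      simpa using this
    have h2 := h1.exp
    have hpos : (0:ℝ) < 1 + Real.exp (-(1 - t0) / σ) := by positivity
    have h3 := (h2.const_add 1).log (ne_of_gt hpos)
    have h4 := h3.const_mul σ
    have h5 := ((hasDerivAt_id t0).const_sub 1).add h4
    refine h5.congr_deriv ?_
    have e0 : (0:ℝ) < Real.exp (-(1 - t0) / σ) := Real.exp_pos _
    simp only [sgdPhi]
    field_simp
    ring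
  have hscalar := hF0.comp_hasFDerivAt w hu
  -- norm-squared part
  have hsq : HasFDerivAt (fun w' : E => ⟪w', w'⟫)
      ((fderivInnerCLM ℝ (w, w)).comp
        ((ContinuousLinearMap.id ℝ E).prod (ContinuousLinearMap.id ℝ E))) w :=
    (hasFDerivAt_id w).inner ℝ (hasFDerivAt_id w)
  have hnorm' := hsq.const_mul (lam / 2)
  have hnorm := hnorm'.congr_of_eventuallyEq
    (Filter.Eventually.of_forall (fun z : E => by
      simp only [real_inner_self_eq_norm_sq]; ring) :
      (fun w' : E => lam * ‖w'‖ ^ 2 / 2) =ᶠ[nhds w] fun w' : E => lam / 2 * ⟪w', w'⟫)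
  have htot := hscalar.add hnorm
  rw [hasGradientAt_iff_hasFDerivAt]
  refine htot.congr_fderiv ?_
  ext z
  simp only [InnerProductSpace.toDual_apply_apply, ContinuousLinearMap.add_apply,
    ContinuousLinearMap.smul_apply, ContinuousLinearMap.coe_comp', Function.comp_apply,
    ContinuousLinearMap.prod_apply, ContinuousLinearMap.coe_id', id_eq,
    fderivInnerCLM_apply,
    inner_add_left, real_inner_smul_left, innerSL_apply_apply, smul_eq_mul]
  rw [real_inner_comm z w]
  ring

end Aux
section Aux2
open MeasureTheory Filter Set Topology
open scoped ENNReal NNReal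

private def itUnion {E : Type*} {m : ℕ} (h : Fin m → E → E) (B : Set E) : ℕ → Set E
  | 0 => B
  | (k+1) => ⋃ i, h i '' itUnion h B k

private def itInter {E : Type*} {m : ℕ} (h : Fin m → E → E) (B : Set E) : ℕ → Set E
  | 0 => B
  | (j+1) => ⋂ i, h i ⁻¹' itInter h B j

private def wordMap {E : Type*} {m : ℕ} (h : Fin m → E → E) : (k : ℕ) → (Fin k → Fin m) → E → E
  | 0, _ => id
  | (k+1), w => h (w 0) ∘ wordMap h k (fun j => w j.succ)

theorem ifs_dim_le {E : Type*} [NormedAddCommGroup E] [MeasurableSpace E]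
    [BorelSpace E] [ProperSpace E]
    {m : ℕ} (hm : 0 < m) (h : Fin m → E → E) (c : ℝ≥0)
    (hc0 : 0 < (c : ℝ)) (hc1 : (c : ℝ) < 1)
    (hlip : ∀ i, LipschitzWith c (h i))
    (p : Fin m → ℝ≥0∞) (hpsum : ∑ i, p i = 1)
    (μ : Measure E) [IsProbabilityMeasure μ]
    (hinv : μ = ∑ i, p i • μ.map (h i)) :
    upperHausdorffDim μ ≤ ENNReal.ofReal (Real.log m / Real.log (1 / (c : ℝ))) := by
  have : Nonempty (Fin m) := ⟨⟨0, hm⟩⟩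
  set cr : ℝ := (c : ℝ) with hcr
  have hcrne : cr ≠ 0 := ne_of_gt hc0
  -- a bound on the images of 0
  obtain ⟨K, hK, hK0⟩ : ∃ K : ℝ, (∀ i, ‖h i 0‖ ≤ K) ∧ 0 ≤ K := by
    refine ⟨max 0 ((Finset.univ : Finset (Fin m)).sup' Finset.univ_nonempty
      fun i => ‖h i 0‖), fun i => le_max_of_le_right
        (Finset.le_sup' (fun i => ‖h i 0‖) (Finset.mem_univ i)), le_max_left _ _⟩
  set r : ℝ := K / (1 - cr) with hrdef
  have hr0 : 0 ≤ r := div_nonneg hK0 (by linarith)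
  have h1cne : (1 : ℝ) - cr ≠ 0 := by linarith
  have hfix : cr * r + K = r := by
    rw [hrdef]; field_simp; ring
  have hconts : ∀ i, Continuous (h i) := fun i => (hlip i).continuous
  have hgrow : ∀ i x, ‖h i x‖ ≤ cr * ‖x‖ + K := by
    intro i x
    have h1 : ‖h i x - h i 0‖ ≤ cr * ‖x‖ := by
      have := (hlip i).dist_le_mul x 0
      rwa [dist_eq_norm, dist_zero_right] at this
    calc ‖h i x‖ = ‖(h i x - h i 0) + h i 0‖ := by congr 1; abel
    _ ≤ ‖h i x - h i 0‖ + ‖h i 0‖ := norm_add_le _ _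
    _ ≤ cr * ‖x‖ + K := add_le_add h1 (hK i)
  set B : Set E := Metric.closedBall (0 : E) (r + 1) with hBdef
  -- the decreasing family A k
  set A : ℕ → Set E := itUnion h B with hAdef
  have hA0 : A 0 = B := rfl
  have hAsucc : ∀ k, A (k + 1) = ⋃ i, h i '' A k := fun _ => rfl
  have hAcomp : ∀ k, IsCompact (A k) := by
    intro k; induction k with
    | zero => exact isCompact_closedBall _ _
    | succ k ih => exact isCompact_iUnion fun i => ih.image (hconts i)
  have hAmeas : ∀ k, MeasurableSet (A k) := fun k => (hAcomp k).isClosed.measurableSet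
  have hBsub : ∀ i, ∀ x ∈ B, h i x ∈ B := by
    intro i x hx
    rw [hBdef, Metric.mem_closedBall, dist_zero_right] at hx ⊢
    calc ‖h i x‖ ≤ cr * ‖x‖ + K := hgrow i x
    _ ≤ cr * (r + 1) + K := by nlinarith
    _ = r + cr := by linarith [hfix]
    _ ≤ r + 1 := by linarith
  have hdec : ∀ k, A (k + 1) ⊆ A k := by
    intro k; induction k with
    | zero =>
      rw [hAsucc, hA0]
      exact iUnion_subset fun i => image_subset_iff.2 fun x hx => hBsub i x hx
    | succ k ih =>
      calc A (k + 1 + 1) = ⋃ i, h i '' A (k + 1) := hAsucc (k + 1)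
      _ ⊆ ⋃ i, h i '' A k := iUnion_mono fun i => image_mono ih
      _ = A (k + 1) := (hAsucc k).symm
  -- one-step decomposition of the measure
  have hmeasstep : ∀ s : Set E, MeasurableSet s → μ s = ∑ i, p i * μ (h i ⁻¹' s) := by
    intro s hs
    conv_lhs => rw [hinv]
    rw [Measure.finset_sum_apply]
    refine Finset.sum_congr rfl fun i _ => ?_
    rw [Measure.smul_apply, smul_eq_mul, Measure.map_apply ((hconts i).measurable) hs]
  -- the sets D j
  set D : ℕ → Set E := itInter h B with hDdef
  have hD0 : D 0 = B := rfl
  have hDsucc : ∀ j, D (j + 1) = ⋂ i, h i ⁻¹' D j := fun _ => rfl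
  have hDmeas : ∀ j, MeasurableSet (D j) := by
    intro j; induction j with
    | zero => exact measurableSet_closedBall
    | succ j ih => exact MeasurableSet.iInter fun i => (hconts i).measurable ih
  have hμD : ∀ j, μ (D j) ≤ μ B := by
    intro j; induction j with
    | zero => exact le_rfl
    | succ j ih =>
      calc μ (D (j + 1)) = (∑ i, p i) * μ (D (j + 1)) := by rw [hpsum, one_mul]
      _ = ∑ i, p i * μ (D (j + 1)) := Finset.sum_mul _ _ _
      _ ≤ ∑ i, p i * μ (h i ⁻¹' D j) := by
          refine Finset.sum_le_sum fun i _ => mul_le_mul_right (measure_mono ?_) _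
          rw [hDsucc]; exact iInter_subset _ i
      _ = μ (D j) := (hmeasstep _ (hDmeas j)).symm
      _ ≤ μ B := ih
  have habs : ∀ j (x : E), ‖x‖ ≤ r + (1 / cr) ^ j → x ∈ D j := by
    intro j; induction j with
    | zero =>
      intro x hx
      rw [hD0, hBdef, Metric.mem_closedBall, dist_zero_right]
      simpa using hx
    | succ j ih =>
      intro x hx
      rw [hDsucc]
      refine mem_iInter.2 fun i => ih _ ?_
      have hkey : cr * (1 / cr) ^ (j + 1) = (1 / cr) ^ j := by
        rw [pow_succ', ← mul_assoc, one_div, mul_inv_cancel₀ hcrne, one_mul]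
      calc ‖h i x‖ ≤ cr * ‖x‖ + K := hgrow i x
      _ ≤ cr * (r + (1 / cr) ^ (j + 1)) + K := by nlinarith
      _ = (cr * r + K) + cr * (1 / cr) ^ (j + 1) := by ring
      _ = r + (1 / cr) ^ j := by rw [hfix, hkey]
  have hone_lt : 1 < 1 / cr := one_lt_one_div hc0 hc1
  have hBfull : μ B = 1 := by
    have hsub : ∀ j, Metric.closedBall (0 : E) (r + (1 / cr) ^ j) ⊆ D j := by
      intro j x hx
      rw [Metric.mem_closedBall, dist_zero_right] at hx
      exact habs j x hx
    have hmono : Monotone fun j : ℕ => Metric.closedBall (0 : E) (r + (1 / cr) ^ j) := by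
      intro j k hjk
      exact Metric.closedBall_subset_closedBall
        (by have := pow_le_pow_right₀ hone_lt.le hjk; linarith)
    have hunion : ⋃ j : ℕ, Metric.closedBall (0 : E) (r + (1 / cr) ^ j) = univ := by
      refine eq_univ_of_forall fun x => ?_
      obtain ⟨j, hj⟩ :=
        ((tendsto_pow_atTop_atTop_of_one_lt hone_lt).eventually_ge_atTop ‖x‖).exists
      exact mem_iUnion.2 ⟨j, by rw [Metric.mem_closedBall, dist_zero_right]; linarith⟩
    have h1 : (1 : ℝ≥0∞) = μ (⋃ j : ℕ, Metric.closedBall (0 : E) (r + (1 / cr) ^ j)) := by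
      rw [hunion, measure_univ]
    refine le_antisymm prob_le_one ?_
    rw [h1, (hmono.directed_le).measure_iUnion]
    exact iSup_le fun j => (measure_mono (hsub j)).trans (hμD j)
  have hA1 : ∀ k, μ (A k) = 1 := by
    intro k; induction k with
    | zero => exact hBfull
    | succ k ih =>
      refine le_antisymm prob_le_one ?_
      calc (1 : ℝ≥0∞) = ∑ i, p i * μ (A k) := by
            simp only [ih, mul_one]; exact hpsum.symm
      _ ≤ ∑ i, p i * μ (h i ⁻¹' A (k + 1)) := by
          refine Finset.sum_le_sum fun i _ => mul_le_mul_right (measure_mono ?_) _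
          intro x hx
          exact mem_preimage.2 (by rw [hAsucc]; exact mem_iUnion.2 ⟨i, mem_image_of_mem _ hx⟩)
      _ = μ (A (k + 1)) := (hmeasstep _ (hAmeas _)).symm
  -- the limit set
  set Aset : Set E := ⋂ k, A k with hAsetdef
  have hAsetmeas : MeasurableSet Aset := MeasurableSet.iInter fun k => hAmeas k
  have hAset1 : μ Aset = 1 := by
    have hcnull : μ (⋃ k, (A k)ᶜ) = 0 :=
      measure_iUnion_null fun k => by
        rw [measure_compl (hAmeas k) (measure_ne_top μ _), hA1 k, measure_univ, tsub_self]
    have hcompl : Asetᶜ = ⋃ k, (A k)ᶜ := by rw [hAsetdef, compl_iInter]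
    refine le_antisymm prob_le_one ?_
    calc (1 : ℝ≥0∞) = μ univ := measure_univ.symm
    _ = μ (Aset ∪ Asetᶜ) := by rw [union_compl_self]
    _ ≤ μ Aset + μ Asetᶜ := measure_union_le _ _
    _ = μ Aset := by rw [hcompl, hcnull, add_zero]
  -- word maps and covers
  set T : (k : ℕ) → (Fin k → Fin m) → E → E := wordMap h with hTdef
  have hTsucc : ∀ k (w : Fin (k + 1) → Fin m),
      T (k + 1) w = h (w 0) ∘ T k (fun j => w j.succ) := fun _ _ => rfl
  have hTlip : ∀ k (w : Fin k → Fin m), LipschitzWith (c ^ k) (T k w) := by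
    intro k; induction k with
    | zero => intro w; rw [pow_zero]; exact LipschitzWith.id
    | succ k ih =>
      intro w
      have := (hlip (w 0)).comp (ih fun j => w j.succ)
      rw [hTsucc, pow_succ, mul_comm (c ^ k) c]
      exact this
  have hTcover : ∀ k, A k ⊆ ⋃ w : Fin k → Fin m, T k w '' B := by
    intro k; induction k with
    | zero =>
      intro x hx
      exact mem_iUnion.2 ⟨fun j => j.elim0, x, hx, rfl⟩
    | succ k ih =>
      intro x hx
      rw [hAsucc] at hx
      obtain ⟨i, x', hx', rfl⟩ : ∃ i x', x' ∈ A k ∧ h i x' = x := by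
        simpa [mem_iUnion] using hx
      obtain ⟨w, x0, hx0, rfl⟩ : ∃ w x0, x0 ∈ B ∧ T k w x0 = x' := by
        simpa [mem_iUnion] using ih hx'
      refine mem_iUnion.2 ⟨Fin.cons i w, x0, hx0, ?_⟩
      have hTw : T (k + 1) (Fin.cons i w) = h i ∘ T k w := by
        rw [hTsucc]
        simp [Fin.cons_zero, Fin.cons_succ]
      rw [hTw]; rfl
  -- diameter facts
  set DB : ℝ≥0∞ := EMetric.diam B with hDBdef
  have hDBne : DB ≠ ⊤ := Metric.isBounded_closedBall.ediam_ne_top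
  have hdiam : ∀ k (w : Fin k → Fin m),
      EMetric.diam (T k w '' B) ≤ (c : ℝ≥0∞) ^ k * DB := by
    intro k w
    have := (hTlip k w).ediam_image_le B
    rwa [ENNReal.coe_pow] at this
  -- Hausdorff dimension bound for Aset
  have hdim : ∀ s : ℝ, 0 < s → (m : ℝ) * cr ^ s < 1 → dimH Aset ≤ ENNReal.ofReal s := by
    intro s hs hms
    have hq : (m : ℝ≥0∞) * (c : ℝ≥0∞) ^ s < 1 := by
      rw [show ((m : ℝ≥0∞)) = (((m : ℝ≥0)) : ℝ≥0∞) from (ENNReal.coe_natCast m).symm,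
        ← ENNReal.coe_rpow_of_nonneg c hs.le, ← ENNReal.coe_mul,
        ← ENNReal.coe_one, ENNReal.coe_lt_coe, ← NNReal.coe_lt_coe]
      push_cast [NNReal.coe_rpow]
      exact hms
    have hr : Tendsto (fun k : ℕ => (c : ℝ≥0∞) ^ k * DB) atTop (𝓝 0) := by
      have h0 : Tendsto (fun k : ℕ => (c : ℝ≥0∞) ^ k) atTop (𝓝 0) :=
        ENNReal.tendsto_pow_atTop_nhds_zero_of_lt_one
          (by rwa [← ENNReal.coe_one, ENNReal.coe_lt_coe, ← NNReal.coe_lt_coe])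
      simpa using ENNReal.Tendsto.mul_const h0 (Or.inr hDBne)
    have hle := Measure.hausdorffMeasure_le_liminf_sum (X := E) s Aset
      (fun k : ℕ => (c : ℝ≥0∞) ^ k * DB) hr (fun k (w : Fin k → Fin m) => T k w '' B)
      (Eventually.of_forall fun k w => hdiam k w)
      (Eventually.of_forall fun k => (iInter_subset A k).trans (hTcover k))
    have hsum : ∀ k : ℕ, ∑ w : Fin k → Fin m, EMetric.diam (T k w '' B) ^ s ≤
        ((m : ℝ≥0∞) * (c : ℝ≥0∞) ^ s) ^ k * DB ^ s := by
      intro k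
      calc ∑ w : Fin k → Fin m, EMetric.diam (T k w '' B) ^ s
          ≤ ∑ _w : Fin k → Fin m, ((c : ℝ≥0∞) ^ k * DB) ^ s :=
            Finset.sum_le_sum fun w _ => ENNReal.rpow_le_rpow (hdiam k w) hs.le
      _ = (m ^ k : ℕ) * ((c : ℝ≥0∞) ^ k * DB) ^ s := by
            rw [Finset.sum_const, Finset.card_univ, Fintype.card_fun, Fintype.card_fin,
              Fintype.card_fin, nsmul_eq_mul]
      _ = ((m : ℝ≥0∞) * (c : ℝ≥0∞) ^ s) ^ k * DB ^ s := by
            have hck : ((c : ℝ≥0∞) ^ k) ^ s = ((c : ℝ≥0∞) ^ s) ^ k := by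
              rw [← ENNReal.rpow_natCast (c : ℝ≥0∞) k, ← ENNReal.rpow_mul, mul_comm,
                ENNReal.rpow_mul, ENNReal.rpow_natCast]
            rw [Nat.cast_pow, ENNReal.mul_rpow_of_nonneg _ _ hs.le, hck, mul_pow, ← mul_assoc]
    have htends : Tendsto (fun k : ℕ => ((m : ℝ≥0∞) * (c : ℝ≥0∞) ^ s) ^ k * DB ^ s)
        atTop (𝓝 0) := by
      have h0 := ENNReal.tendsto_pow_atTop_nhds_zero_of_lt_one hq
      simpa using ENNReal.Tendsto.mul_const h0 (Or.inr (ENNReal.rpow_ne_top_of_nonneg hs.le hDBne))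
    have hH : μH[s] Aset = 0 := by
      refine le_antisymm ?_ zero_le
      refine hle.trans ?_
      have := liminf_le_liminf (Eventually.of_forall hsum)
        (f := atTop) (u := fun k : ℕ => ∑ w : Fin k → Fin m, EMetric.diam (T k w '' B) ^ s)
        (v := fun k : ℕ => ((m : ℝ≥0∞) * (c : ℝ≥0∞) ^ s) ^ k * DB ^ s)
      rw [htends.liminf_eq] at this
      exact this
    have hd := dimH_le_of_hausdorffMeasure_ne_top (X := E) (s := Aset) (d := s.toNNReal) ?_
    · rwa [ENNReal.ofReal]
    · rw [Real.coe_toNNReal _ hs.le, hH]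
      exact ENNReal.zero_ne_top
  -- conclusion
  set L : ℝ := Real.log m / Real.log (1 / cr) with hLdef
  have hlogpos : 0 < Real.log (1 / cr) := Real.log_pos hone_lt
  have hm1 : (1 : ℝ) ≤ (m : ℝ) := by exact_mod_cast hm
  have hL0 : 0 ≤ L := div_nonneg (Real.log_nonneg hm1) hlogpos.le
  have hcond : ∀ s : ℝ, L < s → (m : ℝ) * cr ^ s < 1 := by
    intro s hLs
    have hmpos : (0 : ℝ) < m := by linarith
    have hrp : (0 : ℝ) < cr ^ s := Real.rpow_pos_of_pos hc0 s
    rw [← Real.exp_log (show (0:ℝ) < (m : ℝ) * cr ^ s by positivity), ← Real.exp_zero,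
      Real.exp_lt_exp]
    rw [Real.log_mul (ne_of_gt hmpos) (ne_of_gt hrp), Real.log_rpow hc0]
    have hlog1 : Real.log (1 / cr) = -Real.log cr := by
      rw [one_div, Real.log_inv]
    have := (div_lt_iff₀ hlogpos).1 hLs
    rw [hlog1] at this
    linarith
  have hdimL : dimH Aset ≤ ENNReal.ofReal L := by
    refine ENNReal.le_of_forall_pos_le_add fun ε hε _ => ?_
    have hsL : L < L + (ε : ℝ) := by
      have : (0:ℝ) < ε := hε
      linarith
    have := hdim (L + (ε : ℝ)) (by linarith [hL0, show (0:ℝ) < ε from hε]) (hcond _ hsL)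
    calc dimH Aset ≤ ENNReal.ofReal (L + (ε : ℝ)) := this
    _ = ENNReal.ofReal L + ENNReal.ofReal (ε : ℝ) :=
        ENNReal.ofReal_add hL0 (by positivity)
    _ = ENNReal.ofReal L + ε := by rw [ENNReal.ofReal_coe_nnreal]
  refine le_trans ?_ hdimL
  exact iInf_le_of_le Aset (iInf_le_of_le hAsetmeas (iInf_le_of_le hAset1 le_rfl))

lemma sgd_map_contract {E : Type*} [NormedAddCommGroup E] [InnerProductSpace ℝ E]
    {n : ℕ} (a : Fin n → E) (y : Fin n → ℝ)
    (hy : ∀ i, y i = 1 ∨ y i = -1)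
    {lam σ R η : ℝ} (hlam : 0 < lam) (hσ : 0 < σ) (hR : ∀ i, ‖a i‖ ≤ R)
    (hη : 0 < η) (hηD : η * (lam + R ^ 2 / (4 * σ)) < 1)
    {b : ℕ} (hb : 0 < b) (Si : Finset (Fin n)) (hcard : Si.card = b)
    (u v : E) :
    ‖((1 - η * lam) • u - (η / b) • ∑ j ∈ Si, (sgdPhi σ (y j * ⟪a j, u⟫) * y j) • a j)
      - ((1 - η * lam) • v - (η / b) • ∑ j ∈ Si, (sgdPhi σ (y j * ⟪a j, v⟫) * y j) • a j)‖
      ≤ (1 - η * lam) * ‖u - v‖ := by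
  have hbR : (0 : ℝ) < (b : ℝ) := by exact_mod_cast hb
  have hR2 : 0 ≤ R ^ 2 / (4 * σ) := by positivity
  have hc0 : 0 ≤ 1 - η * lam := by nlinarith
  have hy2 : ∀ j, y j * y j = 1 := by
    intro j; rcases hy j with h | h <;> rw [h] <;> norm_num
  set x : E := u - v with hxdef
  set cv : Fin n → ℝ := fun j =>
    if y j * ⟪a j, u⟫ = y j * ⟪a j, v⟫ then 0
    else (sgdPhi σ (y j * ⟪a j, u⟫) - sgdPhi σ (y j * ⟪a j, v⟫))
      / (y j * ⟪a j, u⟫ - y j * ⟪a j, v⟫) with hcvdef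
  have hcv0 : ∀ j, 0 ≤ cv j := by
    intro j
    rw [hcvdef]; dsimp only
    split_ifs with hcase
    · exact le_rfl
    · rcases (sub_ne_zero.2 hcase).lt_or_gt with hlt | hgt
      · have h1 : y j * ⟪a j, u⟫ < y j * ⟪a j, v⟫ := by linarith
        exact div_nonneg_of_nonpos
          (sub_nonpos.2 (sgdPhi_mono hσ h1.le)) (by linarith)
      · have h1 : y j * ⟪a j, v⟫ < y j * ⟪a j, u⟫ := by linarith
        exact div_nonneg (sub_nonneg.2 (sgdPhi_mono hσ h1.le)) (by linarith)
  have hcvle : ∀ j, cv j ≤ 1 / (4 * σ) := by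
    intro j
    rw [hcvdef]; dsimp only
    split_ifs with hcase
    · positivity
    · have hne : y j * ⟪a j, u⟫ - y j * ⟪a j, v⟫ ≠ 0 := sub_ne_zero.2 hcase
      calc (sgdPhi σ (y j * ⟪a j, u⟫) - sgdPhi σ (y j * ⟪a j, v⟫))
            / (y j * ⟪a j, u⟫ - y j * ⟪a j, v⟫)
          ≤ |(sgdPhi σ (y j * ⟪a j, u⟫) - sgdPhi σ (y j * ⟪a j, v⟫))
            / (y j * ⟪a j, u⟫ - y j * ⟪a j, v⟫)| := le_abs_self _
      _ = |sgdPhi σ (y j * ⟪a j, u⟫) - sgdPhi σ (y j * ⟪a j, v⟫)|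
            / |y j * ⟪a j, u⟫ - y j * ⟪a j, v⟫| := abs_div _ _
      _ ≤ 1 / (4 * σ) := by
          rw [div_le_iff₀ (abs_pos.2 hne)]
          exact sgdPhi_lipschitz hσ _ _
  have hdelta : ∀ j, sgdPhi σ (y j * ⟪a j, u⟫) - sgdPhi σ (y j * ⟪a j, v⟫)
      = cv j * (y j * ⟪a j, u⟫ - y j * ⟪a j, v⟫) := by
    intro j
    rw [hcvdef]; dsimp only
    split_ifs with hcase
    · rw [hcase]; ring
    · rw [div_mul_cancel₀ _ (sub_ne_zero.2 hcase)]
  set t : Fin n → ℝ := fun j => (η / b) * cv j with htdef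
  have ht0 : ∀ j, 0 ≤ t j := fun j => mul_nonneg (by positivity) (hcv0 j)
  have htle : ∀ j, t j ≤ (η / b) * (1 / (4 * σ)) := fun j =>
    mul_le_mul_of_nonneg_left (hcvle j) (by positivity)
  set q : E := ∑ j ∈ Si, (t j * ⟪a j, x⟫) • a j with hqdef
  -- rewrite the difference
  have hmain : ((1 - η * lam) • u - (η / b) • ∑ j ∈ Si, (sgdPhi σ (y j * ⟪a j, u⟫) * y j) • a j)
      - ((1 - η * lam) • v - (η / b) • ∑ j ∈ Si, (sgdPhi σ (y j * ⟪a j, v⟫) * y j) • a j)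
      = (1 - η * lam) • x - q := by
    have hterm : ∀ j ∈ Si,
        (η / b) • ((sgdPhi σ (y j * ⟪a j, u⟫) * y j) • a j)
          - (η / b) • ((sgdPhi σ (y j * ⟪a j, v⟫) * y j) • a j)
        = (t j * ⟪a j, x⟫) • a j := by
      intro j _
      rw [← smul_sub, ← sub_smul, ← sub_mul, hdelta j]
      rw [smul_smul]
      congr 1
      have hinner : y j * ⟪a j, u⟫ - y j * ⟪a j, v⟫ = y j * ⟪a j, x⟫ := by
        rw [hxdef, inner_sub_right]; ring
      rw [hinner, htdef]
      dsimp only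
      calc η / ↑b * (cv j * (y j * ⟪a j, x⟫) * y j)
          = η / ↑b * cv j * ⟪a j, x⟫ * (y j * y j) := by ring
      _ = η / ↑b * cv j * ⟪a j, x⟫ := by rw [hy2 j, mul_one]
    calc ((1 - η * lam) • u - (η / b) • ∑ j ∈ Si, (sgdPhi σ (y j * ⟪a j, u⟫) * y j) • a j)
          - ((1 - η * lam) • v - (η / b) • ∑ j ∈ Si, (sgdPhi σ (y j * ⟪a j, v⟫) * y j) • a j)
        = (1 - η * lam) • x
          - ((η / b) • ∑ j ∈ Si, (sgdPhi σ (y j * ⟪a j, u⟫) * y j) • a j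
            - (η / b) • ∑ j ∈ Si, (sgdPhi σ (y j * ⟪a j, v⟫) * y j) • a j) := by
          rw [hxdef, smul_sub]; abel
    _ = (1 - η * lam) • x - q := by
          congr 1
          rw [hqdef, Finset.smul_sum, Finset.smul_sum, ← Finset.sum_sub_distrib]
          exact Finset.sum_congr rfl hterm
  rw [hmain]
  -- quadratic estimate
  set P : ℝ := ∑ j ∈ Si, t j * ⟪a j, x⟫ ^ 2 with hPdef
  have hxq : ⟪x, q⟫ = P := by
    rw [hqdef, hPdef, inner_sum]
    refine Finset.sum_congr rfl fun j _ => ?_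
    rw [real_inner_smul_right, real_inner_comm]
    ring
  have hP0 : 0 ≤ P :=
    Finset.sum_nonneg fun j _ => mul_nonneg (ht0 j) (sq_nonneg _)
  set Sr : ℝ := ∑ j ∈ Si, t j * |⟪a j, x⟫| * ‖a j‖ with hSrdef
  have hq_norm : ‖q‖ ≤ Sr := by
    rw [hqdef, hSrdef]
    refine (norm_sum_le _ _).trans (le_of_eq (Finset.sum_congr rfl fun j _ => ?_))
    rw [norm_smul, Real.norm_eq_abs, abs_mul, abs_of_nonneg (ht0 j)]
  have hSr0 : 0 ≤ Sr :=
    Finset.sum_nonneg fun j _ =>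
      mul_nonneg (mul_nonneg (ht0 j) (abs_nonneg _)) (norm_nonneg _)
  set T : ℝ := ∑ j ∈ Si, t j * ‖a j‖ ^ 2 with hTdef
  have hSr2 : Sr ^ 2 ≤ T * P := by
    rw [hSrdef, hTdef, hPdef]
    refine Finset.sum_sq_le_sum_mul_sum_of_sq_eq_mul Si
      (fun j _ => mul_nonneg (ht0 j) (sq_nonneg _))
      (fun j _ => mul_nonneg (ht0 j) (sq_nonneg _))
      (fun j _ => ?_)
    rw [← sq_abs (⟪a j, x⟫)]
    ring
  have hT : T ≤ η * R ^ 2 / (4 * σ) := by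
    have hbound : ∀ j ∈ Si, t j * ‖a j‖ ^ 2 ≤ (η / b) * (1 / (4 * σ)) * R ^ 2 := by
      intro j _
      have ha2 : ‖a j‖ ^ 2 ≤ R ^ 2 := by
        have := hR j
        nlinarith [norm_nonneg (a j)]
      exact mul_le_mul (htle j) ha2 (sq_nonneg _) (by positivity)
    calc T ≤ ∑ _j ∈ Si, (η / b) * (1 / (4 * σ)) * R ^ 2 := Finset.sum_le_sum hbound
    _ = (b : ℝ) * ((η / b) * (1 / (4 * σ)) * R ^ 2) := by
        rw [Finset.sum_const, hcard, nsmul_eq_mul]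
    _ = η * R ^ 2 / (4 * σ) := by field_simp
  have hT0 : 0 ≤ T := Finset.sum_nonneg fun j _ => mul_nonneg (ht0 j) (sq_nonneg _)
  have hTc : T ≤ 2 * (1 - η * lam) := by
    have h1 : η * lam + η * R ^ 2 / (4 * σ) < 1 := by
      have : η * (lam + R ^ 2 / (4 * σ)) = η * lam + η * R ^ 2 / (4 * σ) := by ring
      linarith [hηD, this ▸ hηD]
    linarith
  -- expand the square
  have hsq : ‖(1 - η * lam) • x - q‖ ^ 2 ≤ ((1 - η * lam) * ‖x‖) ^ 2 := by
    have hexp : ‖(1 - η * lam) • x - q‖ ^ 2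
        = ‖(1 - η * lam) • x‖ ^ 2 - 2 * ⟪(1 - η * lam) • x, q⟫ + ‖q‖ ^ 2 :=
      norm_sub_sq_real _ _
    rw [hexp, real_inner_smul_left, hxq, norm_smul, Real.norm_eq_abs,
      abs_of_nonneg hc0]
    have hq2 : ‖q‖ ^ 2 ≤ T * P := by
      calc ‖q‖ ^ 2 ≤ Sr ^ 2 := by nlinarith [norm_nonneg q]
      _ ≤ T * P := hSr2
    nlinarith
  have := Real.sqrt_le_sqrt hsq
  rwa [Real.sqrt_sq (norm_nonneg _),
    Real.sqrt_sq (mul_nonneg hc0 (norm_nonneg _))] at this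

end Aux2

/-- Support vector machines with smooth hinge loss, SGD:
for `ℓ(w,(a,y)) = ℓ_σ(y aᵀw) + λ‖w‖²/2` with
`ℓ_σ(z) = 1 − z + σ log(1 + e^{−(1−z)/σ})` and step-size
`0 < η < 1/(λ + R²/(4σ))`, any invariant measure `μ` of the SGD iterated
function system with batch size `b` satisfies
`dim̄_H μ ≤ log(n/b) / log(1/(1 − ηλ))`. -/
theorem sgd_svm_hausdorff_dim_bound
    (d n b m : ℕ) (hb : 0 < b) (hnm : n = m * b)
    (a : Fin n → EuclideanSpace ℝ (Fin d)) (y : Fin n → ℝ)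
    (hy : ∀ i, y i = 1 ∨ y i = -1)
    (lam σ R η : ℝ) (hlam : 0 < lam) (hσ : 0 < σ)
    (hR : ∀ i, ‖a i‖ ≤ R) (hR0 : 0 ≤ R)
    (hη : 0 < η) (hη' : η < 1 / (lam + R ^ 2 / (4 * σ)))
    (ℓ : EuclideanSpace ℝ (Fin d) → EuclideanSpace ℝ (Fin d) × ℝ → ℝ)
    (hℓ : ∀ w z, ℓ w z =
      (1 - z.2 * ⟪z.1, w⟫ + σ * Real.log (1 + Real.exp (-(1 - z.2 * ⟪z.1, w⟫) / σ)))
        + lam * ‖w‖ ^ 2 / 2)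
    (S : Fin m → Finset (Fin n))
    (hcard : ∀ i, (S i).card = b)
    (hdisj : ∀ i j, i ≠ j → Disjoint (S i) (S j))
    (hcover : ∀ j : Fin n, ∃ i, j ∈ S i)
    (p : Fin m → ℝ≥0∞) (hp : ∀ i, 0 < p i) (hpsum : ∑ i, p i = 1)
    (h : Fin m → EuclideanSpace ℝ (Fin d) → EuclideanSpace ℝ (Fin d))
    (hdef : ∀ i w, h i w = w - (η / b) • ∑ j ∈ S i, gradient (fun w' => ℓ w' (a j, y j)) w)
    (μ : Measure (EuclideanSpace ℝ (Fin d))) [IsProbabilityMeasure μ]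
    (hinv : μ = ∑ i, p i • μ.map (h i)) :
    upperHausdorffDim μ ≤
      ENNReal.ofReal (Real.log ((n : ℝ) / (b : ℝ)) / Real.log (1 / (1 - η * lam))) := by
  classical
  have hm : 0 < m := by
    rcases Nat.eq_zero_or_pos m with hm0 | hm
    · exfalso; subst hm0; simp at hpsum
    · exact hm
  have hbR : (0 : ℝ) < (b : ℝ) := by exact_mod_cast hb
  have hD : (0 : ℝ) < lam + R ^ 2 / (4 * σ) := by positivity
  have hηD : η * (lam + R ^ 2 / (4 * σ)) < 1 := by
    have := (lt_div_iff₀ hD).1 hη'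
    linarith
  have hc0 : (0 : ℝ) < 1 - η * lam := by
    have h1 : 0 ≤ η * (R ^ 2 / (4 * σ)) := by positivity
    nlinarith
  have hgrad : ∀ (j : Fin n) (w : EuclideanSpace ℝ (Fin d)),
      gradient (fun w' => ℓ w' (a j, y j)) w
        = (sgdPhi σ (y j * ⟪a j, w⟫) * y j) • a j + lam • w := by
    intro j w
    have hfun : (fun w' => ℓ w' (a j, y j)) = fun w' : EuclideanSpace ℝ (Fin d) =>
        (1 - y j * ⟪a j, w'⟫ + σ * Real.log (1 + Real.exp (-(1 - y j * ⟪a j, w'⟫) / σ)))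
          + lam * ‖w'‖ ^ 2 / 2 := funext fun w' => hℓ w' (a j, y j)
    rw [hfun]
    exact (svm_hasGradientAt hσ (a j) (y j) w).gradient
  have hform : ∀ i w, h i w = (1 - η * lam) • w
      - (η / b) • ∑ j ∈ S i, (sgdPhi σ (y j * ⟪a j, w⟫) * y j) • a j := by
    intro i w
    rw [hdef]
    have hsum : ∑ j ∈ S i, gradient (fun w' => ℓ w' (a j, y j)) w
        = (∑ j ∈ S i, (sgdPhi σ (y j * ⟪a j, w⟫) * y j) • a j) + (b : ℝ) • (lam • w) := by
      rw [Finset.sum_congr rfl fun j _ => hgrad j w, Finset.sum_add_distrib,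
        Finset.sum_const, hcard i, ← Nat.cast_smul_eq_nsmul ℝ]
    rw [hsum, smul_add]
    have h2 : (η / b) • ((b : ℝ) • (lam • w)) = (η * lam) • w := by
      rw [smul_smul, smul_smul]
      congr 1
      field_simp
    rw [h2, sub_smul, one_smul]
    abel
  set cnn : NNReal := Real.toNNReal (1 - η * lam) with hcnn
  have hcoer : (cnn : ℝ) = 1 - η * lam := Real.coe_toNNReal _ hc0.le
  have hlip : ∀ i, LipschitzWith cnn (h i) := by
    intro i
    refine LipschitzWith.of_dist_le_mul fun u v => ?_
    rw [dist_eq_norm, dist_eq_norm, hform i u, hform i v, hcoer]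
    exact sgd_map_contract a y hy hlam hσ hR hη hηD hb (S i) (hcard i) u v
  have hmain := ifs_dim_le hm h cnn (by rw [hcoer]; exact hc0)
    (by rw [hcoer]; nlinarith [mul_pos hη hlam]) hlip p hpsum μ hinv
  have hnb : (n : ℝ) / (b : ℝ) = (m : ℝ) := by
    rw [hnm]; push_cast; field_simp
  rw [hnb, show (1 : ℝ) / (1 - η * lam) = 1 / (cnn : ℝ) by rw [hcoer]]
  exact hmain
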